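/- arXiv:2302.00405 — 2 statements merged into one kernel-verified Lean document; each statement's English description precedes it below -/
import Mathlib

section
/- For all k ≥ 1 and all n with 2^(2k-1) ≤ n ≤ 2^(2k) − 1, s(n + 2^(2k)) = −s(n) + 3·2^k. -/
def rs : ℕ → ℤ
  | 0 => 1
  | (n+1) =>
    if (n+1) % 2 = 0 then rs ((n+1)/2)
    else (-1)^((n+1)/2) * rs ((n+1)/2)
decreasing_by all_goals exact Nat.div_lt_self (Nat.succ_pos n) (by norm_num)

def s (n : ℕ) : ℤ := ∑ i ∈ Finset.range (n+1), rs i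

def t (n : ℕ) : ℤ := ∑ i ∈ Finset.range (n+1), (-1)^i * rs i

lemma rs_even (q : ℕ) : rs (2*q) = rs q := by
  cases q with
  | zero => rfl
  | succ m =>
    rw [show 2*(m+1) = (2*m+1)+1 by ring, rs]
    have : (2*m+1+1) % 2 = 0 := by omega
    have h2 : (2*m+1+1) / 2 = m+1 := by omega
    simp [this, h2]

lemma rs_odd (q : ℕ) : rs (2*q+1) = (-1)^q * rs q := by
  rw [rs]
  have : (2*q+1) % 2 ≠ 0 := by omega
  have h2 : (2*q+1) / 2 = q := by omega
  simp [this, h2]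

lemma rs_key : ∀ m : ℕ, ∀ j < 2^(m+1), rs (j + 2^(m+1)) = if j < 2^m then rs j else - rs j := by
  intro m
  induction m with
  | zero =>
    intro j hj
    interval_cases j
    · show rs 2 = _
      rw [show (2:ℕ) = 2*1 from rfl, rs_even, show (1:ℕ) = 2*0+1 from rfl, rs_odd]; simp
    · show rs 3 = _
      rw [show (3:ℕ) = 2*1+1 from rfl, rs_odd]; norm_num
  | succ m ih =>
    intro j hj
    have h2 : (2:ℕ)^(m+2) = 2*2^(m+1) := by ring
    have h1 : (2:ℕ)^(m+1) = 2*2^m := by ring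
    obtain ⟨q, rfl | rfl⟩ := Nat.even_or_odd' j
    · have hq : q < 2^(m+1) := by omega
      have e : 2*q + 2^(m+1+1) = 2*(q + 2^(m+1)) := by ring
      rw [e, rs_even, ih q hq, rs_even]
      split_ifs with ha hb hb <;> first | rfl | omega
    · have hq : q < 2^(m+1) := by omega
      have e : 2*q + 1 + 2^(m+1+1) = 2*(q + 2^(m+1)) + 1 := by ring
      rw [e, rs_odd, ih q hq, rs_odd]
      have hev : (-1:ℤ)^(q + 2^(m+1)) = (-1)^q := by
        have hE : Even (2^(m+1)) := by rw [h1]; exact even_two_mul _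
        rw [pow_add, hE.neg_one_pow, mul_one]
      rw [hev]
      split_ifs with ha hb hb <;> first | rfl | omega | ring

lemma s_succ (n : ℕ) : s (n+1) = s n + rs (n+1) := by
  simp [s, Finset.sum_range_succ]

lemma t_succ (n : ℕ) : t (n+1) = t n + (-1)^(n+1) * rs (n+1) := by
  simp [t, Finset.sum_range_succ]

lemma st_odd : ∀ n : ℕ, s (2*n+1) = s n + t n ∧ t (2*n+1) = s n - t n := by
  intro n
  induction n with
  | zero =>
    have h1 : rs 1 = 1 := by rw [show (1:ℕ) = 2*0+1 from rfl, rs_odd]; simp [rs]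
    constructor <;> simp [s, t, Finset.sum_range_succ, h1, rs]
  | succ n ih =>
    obtain ⟨ih1, ih2⟩ := ih
    have p1 : (-1:ℤ)^(2*(n+1)) = 1 := (even_two_mul (n+1)).neg_one_pow
    have p2 : (-1:ℤ)^(2*(n+1)+1) = -1 := by
      rw [pow_succ, p1, one_mul]
    have es : s (2*(n+1)+1) = s (2*n+1) + rs (2*(n+1)) + rs (2*(n+1)+1) := by
      rw [show 2*(n+1)+1 = (2*n+1)+1+1 by ring, s_succ, s_succ,
        show 2*n+1+1+1 = 2*(n+1)+1 by ring, show 2*n+1+1 = 2*(n+1) by ring]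
    have et : t (2*(n+1)+1) = t (2*n+1) + (-1:ℤ)^(2*(n+1)) * rs (2*(n+1))
        + (-1:ℤ)^(2*(n+1)+1) * rs (2*(n+1)+1) := by
      rw [show 2*(n+1)+1 = (2*n+1)+1+1 by ring, t_succ, t_succ,
        show 2*n+1+1+1 = 2*(n+1)+1 by ring, show 2*n+1+1 = 2*(n+1) by ring]
    rw [es, et, ih1, ih2, rs_even, rs_odd, p1, p2, s_succ, t_succ]
    constructor <;> ring

lemma st_pow : ∀ k : ℕ, (s (2^(2*k+1) - 1) = 2^(k+1) ∧ t (2^(2*k+1) - 1) = 0) ∧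
    (s (2^(2*k+2) - 1) = 2^(k+1) ∧ t (2^(2*k+2) - 1) = 2^(k+1)) := by
  intro k
  induction k with
  | zero =>
    have h1 : (2:ℕ)^(2*0+1) - 1 = 2*0+1 := by norm_num
    have h2 : (2:ℕ)^(2*0+2) - 1 = 2*1+1 := by norm_num
    rw [h1, h2]
    obtain ⟨a1, a2⟩ := st_odd 0
    obtain ⟨b1, b2⟩ := st_odd 1
    have hs0 : s 0 = 1 := by simp [s, rs]
    have ht0 : t 0 = 1 := by simp [t, rs]
    have hs1 : s 1 = 2 := by rw [show (1:ℕ) = 2*0+1 from rfl, a1, hs0, ht0]; ring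
    have ht1 : t 1 = 0 := by rw [show (1:ℕ) = 2*0+1 from rfl, a2, hs0, ht0]; ring
    refine ⟨⟨hs1, ht1⟩, ?_, ?_⟩
    · rw [b1, hs1, ht1]; ring
    · rw [b2, hs1, ht1]; ring
  | succ k ih =>
    obtain ⟨-, hs2, ht2⟩ := ih
    have e1 : (2:ℕ)^(2*(k+1)+1) - 1 = 2*(2^(2*k+2) - 1) + 1 := by
      have : (2:ℕ)^(2*(k+1)+1) = 2*2^(2*k+2) := by ring
      have hp : 1 ≤ (2:ℕ)^(2*k+2) := Nat.one_le_two_pow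
      omega
    have e2 : (2:ℕ)^(2*(k+1)+2) - 1 = 2*(2^(2*(k+1)+1) - 1) + 1 := by
      have : (2:ℕ)^(2*(k+1)+2) = 2*2^(2*(k+1)+1) := by ring
      have hp : 1 ≤ (2:ℕ)^(2*(k+1)+1) := Nat.one_le_two_pow
      omega
    have hs3 : s (2^(2*(k+1)+1) - 1) = 2^(k+1+1) := by
      rw [e1, (st_odd _).1, hs2, ht2]; ring
    have ht3 : t (2^(2*(k+1)+1) - 1) = 0 := by
      rw [e1, (st_odd _).2, hs2, ht2]; ring
    refine ⟨⟨hs3, ht3⟩, ?_, ?_⟩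
    · rw [e2, (st_odd _).1, hs3, ht3]; ring
    · rw [e2, (st_odd _).2, hs3, ht3]; ring

theorem stmt8 : ∀ k : ℕ, 1 ≤ k → ∀ n : ℕ, 2^(2*k-1) ≤ n → n ≤ 2^(2*k) - 1 →
    s (n + 2^(2*k)) = -s n + 3 * 2^k := by
  intro k hk n h1 h2
  obtain ⟨k, rfl⟩ : ∃ k', k = k'+1 := ⟨k-1, by omega⟩
  have hmk : 2*(k+1) - 1 = 2*k+1 := by omega
  have hmk2 : 2*(k+1) = (2*k+1)+1 := by omega
  set m := 2*k+1 with hm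
  rw [hmk] at h1
  rw [hmk2] at h2 ⊢
  have hH1 : (1:ℕ) ≤ 2^m := Nat.one_le_two_pow
  have hHP : (2:ℕ)^(m+1) = 2*2^m := by ring
  have hP1 : (1:ℕ) ≤ 2^(m+1) := Nat.one_le_two_pow
  have hn : n < 2^(m+1) := by omega
  have key := rs_key m
  have split1 : s (n + 2^(m+1)) = s (2^(m+1)-1) + ∑ i ∈ Finset.range (n+1), rs (2^(m+1) + i) := by
    rw [s, show n + 2^(m+1) + 1 = 2^(m+1) + (n+1) by omega, Finset.sum_range_add]
    congr 1
    rw [s, show 2^(m+1)-1+1 = 2^(m+1) by omega]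
  have split2 : ∑ i ∈ Finset.range (n+1), rs (2^(m+1) + i)
      = ∑ i ∈ Finset.range (2^m), rs (2^(m+1) + i)
      + ∑ i ∈ Finset.range (n+1-2^m), rs (2^(m+1) + (2^m + i)) := by
    have e : n+1 = 2^m + (n+1-2^m) := by omega
    calc ∑ i ∈ Finset.range (n+1), rs (2^(m+1)+i)
        = ∑ i ∈ Finset.range (2^m + (n+1-2^m)), rs (2^(m+1)+i) := by rw [← e]
      _ = _ := Finset.sum_range_add _ _ _
  have part1 : ∑ i ∈ Finset.range (2^m), rs (2^(m+1) + i) = s (2^m - 1) := by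
    rw [s, show 2^m - 1 + 1 = 2^m by omega]
    refine Finset.sum_congr rfl fun i hi => ?_
    simp only [Finset.mem_range] at hi
    rw [Nat.add_comm, key i (by omega), if_pos hi]
  have hsn : s n = s (2^m - 1) + ∑ i ∈ Finset.range (n+1-2^m), rs (2^m + i) := by
    have e : n+1 = 2^m + (n+1-2^m) := by omega
    calc s n = ∑ i ∈ Finset.range (2^m + (n+1-2^m)), rs i := by rw [s, ← e]
      _ = ∑ i ∈ Finset.range (2^m), rs i + ∑ i ∈ Finset.range (n+1-2^m), rs (2^m+i) :=
          Finset.sum_range_add _ _ _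
      _ = _ := by rw [s, show 2^m-1+1 = 2^m by omega]
  have part2 : ∑ i ∈ Finset.range (n+1-2^m), rs (2^(m+1) + (2^m + i))
      = -(s n - s (2^m - 1)) := by
    have hc : ∀ i ∈ Finset.range (n+1-2^m), rs (2^(m+1) + (2^m + i)) = - rs (2^m + i) := by
      intro i hi
      simp only [Finset.mem_range] at hi
      rw [Nat.add_comm, key (2^m+i) (by omega), if_neg (by omega)]
    rw [Finset.sum_congr rfl hc, Finset.sum_neg_distrib, hsn]
    ring
  obtain ⟨⟨hsH, -⟩, hsP, -⟩ := st_pow k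
  rw [split1, split2, part1, part2,
    show (2:ℕ)^(m+1) = 2^(2*k+2) from by rw [hm],
    show (2:ℕ)^m = 2^(2*k+1) from by rw [hm], hsH, hsP]
  ring
end

section
/- For all k ≥ 0, s(2^k) = 2^⌊(k+1)/2⌋ + 1 and s(2^k − 1) = 2^⌊(k+1)/2⌋; for all k ≥ 1, s(2^k − 2) = 2^⌊(k+1)/2⌋ + (−1)^k. -/
lemma rs_two_mul (n : ℕ) : rs (2*n) = rs n := by
  cases n with
  | zero => rfl
  | succ m =>
    show rs (2*m+1+1) = rs (m+1)
    rw [rs]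
    have h1 : (2*m+1+1) % 2 = 0 := by omega
    have h2 : (2*m+1+1) / 2 = m+1 := by omega
    simp [h1, h2]

lemma rs_two_mul_add_one (n : ℕ) : rs (2*n+1) = (-1)^n * rs n := by
  rw [rs]
  have h1 : (2*n+1) % 2 ≠ 0 := by omega
  have h2 : (2*n+1) / 2 = n := by omega
  simp [h1, h2]

lemma key (n : ℕ) : s (2*n+1) = s n + t n ∧ t (2*n+1) = s n - t n := by
  induction n with
  | zero =>
    have r0 : rs 0 = 1 := by simp [rs]
    have r1 : rs 1 = 1 := by
      rw [show (1:ℕ) = 2*0+1 from rfl, rs_two_mul_add_one, r0]; ring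
    constructor <;> simp [s, t, Finset.sum_range_succ, r0, r1]
  | succ m ih =>
    have e1 : 2*(m+1)+1 = (2*m+1) + 1 + 1 := by ring
    have e2 : 2*m+1+1 = 2*(m+1) := by ring
    have h2 : rs (2*m+1+1) = rs (m+1) := by rw [e2, rs_two_mul]
    have h3 : rs (2*(m+1)+1) = (-1)^(m+1) * rs (m+1) := rs_two_mul_add_one (m+1)
    constructor
    · rw [e1, s_succ, s_succ, h2, ← e1, h3, ih.1, s_succ, t_succ]; ring
    · have ha : (-1:ℤ)^(2*m+1+1) = 1 := by
        rw [show 2*m+1+1 = 2*(m+1) by ring]; simp [pow_mul]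
      have hb : (-1:ℤ)^(2*m+1+1+1) = -1 := by rw [pow_succ, ha]; ring
      rw [e1, t_succ, t_succ, h2, ← e1, h3, ih.2, s_succ, t_succ, e1, ha, hb]
      ring

lemma uv (k : ℕ) : s (2^k - 1) = 2^((k+1)/2) ∧
    t (2^k - 1) = if k % 2 = 0 then 2^((k+1)/2) else 0 := by
  induction k with
  | zero => constructor <;> simp [s, t, rs]
  | succ m ih =>
    have hp : 1 ≤ 2^m := Nat.one_le_two_pow
    have e : 2^(m+1) - 1 = 2*(2^m - 1) + 1 := by
      have : 2^(m+1) = 2 * 2^m := by ring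
      omega
    obtain ⟨hs, ht⟩ := ih
    have k1 := (key (2^m - 1)).1
    have k2 := (key (2^m - 1)).2
    rw [← e] at k1 k2
    rcases Nat.even_or_odd m with he | ho
    · obtain ⟨a, rfl⟩ := he
      have h1 : (a+a) % 2 = 0 := by omega
      have h2 : (a+a+1) % 2 = 1 := by omega
      have h3 : (a+a+1+1)/2 = (a+a+1)/2 + 1 := by omega
      simp [h1] at ht
      constructor
      · rw [k1, hs, ht, h3]; ring
      · simp [h2]; rw [k2, hs, ht]; ring
    · obtain ⟨a, rfl⟩ := ho
      have h1 : (2*a+1) % 2 = 1 := by omega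
      have h2 : (2*a+1+1) % 2 = 0 := by omega
      have h3 : (2*a+1+1+1)/2 = (2*a+1+1)/2 := by omega
      simp [h1] at ht
      constructor
      · rw [k1, hs, ht, h3]; ring
      · rw [if_pos h2, k2, hs, ht, h3]; ring

lemma rs_pow (k : ℕ) : rs (2^k) = 1 := by
  induction k with
  | zero => show rs (2*0+1) = 1; rw [rs_two_mul_add_one]; simp [rs]
  | succ m ih => rw [show 2^(m+1) = 2 * 2^m by ring, rs_two_mul, ih]

lemma rs_pow_sub_one (k : ℕ) (hk : 1 ≤ k) : rs (2^k - 1) = -(-1)^k := by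
  induction k with
  | zero => omega
  | succ m ih =>
    rcases Nat.eq_or_lt_of_le hk with h | h
    · simp [← h]
      show rs (2*0+1) = 1
      rw [rs_two_mul_add_one]; simp [rs]
    · have hm : 1 ≤ m := by omega
      have hp : 1 ≤ 2^m := Nat.one_le_two_pow
      have e : 2^(m+1) - 1 = 2*(2^m - 1) + 1 := by
        have : 2^(m+1) = 2 * 2^m := by ring
        omega
      rw [e, rs_two_mul_add_one, ih hm]
      have : Odd (2^m - 1) := by
        have h2 : 2 ≤ 2^m := by
          calc 2 = 2^1 := rfl
          _ ≤ 2^m := Nat.pow_le_pow_right (by norm_num) hm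
        refine ⟨2^(m-1) - 1, ?_⟩
        have : 2^m = 2 * 2^(m-1) := by
          rw [← pow_succ']
          congr 1
          omega
        omega
      rw [this.neg_one_pow]
      ring

theorem stmt13 : (∀ k : ℕ, s (2^k) = 2^((k+1)/2) + 1) ∧
    (∀ k : ℕ, s (2^k - 1) = 2^((k+1)/2)) ∧
    (∀ k : ℕ, 1 ≤ k → s (2^k - 2) = 2^((k+1)/2) + (-1)^k) := by
  refine ⟨fun k => ?_, fun k => (uv k).1, fun k hk => ?_⟩
  · have hp : 1 ≤ 2^k := Nat.one_le_two_pow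
    have e : 2^k = (2^k - 1) + 1 := by omega
    rw [e, s_succ, ← e, rs_pow, (uv k).1]
  · have h2 : 2 ≤ 2^k := by
      calc 2 = 2^1 := rfl
      _ ≤ 2^k := Nat.pow_le_pow_right (by norm_num) hk
    have e : 2^k - 1 = (2^k - 2) + 1 := by omega
    have := (uv k).1
    rw [e, s_succ, ← e, rs_pow_sub_one k hk] at this
    linarith
end
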